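/- Let G₁ and G₂ be finite families of continuous functions ℝ → ℝ with |G₁| and |G₂| odd, such that any two distinct members of G₁ ∪ G₂ cross exactly once. For i ∈ {1, 2} let kᵢ = (|Gᵢ| + 1)/2 and let λᵢ(x) denote the kᵢ-th largest value of the multiset {g(x) : g ∈ Gᵢ} (the median level of Gᵢ). Then there exists x ∈ ℝ with λ₁(x) = λ₂(x), i.e., the median levels of the two pseudo-line families have a common point. -/

import Mathlib

noncomputable local instance : DecidableEq (ℝ → ℝ) := Classical.decEq _

/-- `Prec f g` (written `f ≺ g`): the pseudo-lines `f` and `g` cross exactly once,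
at a point `x₀` with `f x > g x` for all `x < x₀` and `f x < g x` for all `x > x₀`. -/
def Prec (f g : ℝ → ℝ) : Prop :=
  ∃ x₀ : ℝ, f x₀ = g x₀ ∧ (∀ x < x₀, g x < f x) ∧ (∀ x > x₀, f x < g x)

/-- Two pseudo-lines cross exactly once. -/
def CrossesOnce (f g : ℝ → ℝ) : Prop :=
  Prec f g ∨ Prec g f

/-- The `k`-th largest element of a finite multiset of reals
(`k` is `1`-based; it is the entry of index `card − k` in the
ascending sorted list). -/
noncomputable def kthLargest (s : Multiset ℝ) (k : ℕ) : ℝ :=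
  (s.sort (· ≤ ·)).getD (Multiset.card s - k) 0

namespace HamAux


lemma countP_sort (s : Multiset ℝ) (p : ℝ → Prop) [DecidablePred p] :
    Multiset.countP p s = (s.sort (· ≤ ·)).countP (fun a => decide (p a)) := by
  conv_lhs => rw [← Multiset.sort_eq (s := s) (r := (· ≤ ·))]
  exact Multiset.coe_countP (p := p) _

lemma kth_eq (s : Multiset ℝ) (k : ℕ) (hk1 : 1 ≤ k) (hk2 : k ≤ Multiset.card s) :
    ∃ h : Multiset.card s - k < (s.sort (· ≤ ·)).length,
      kthLargest s k = (s.sort (· ≤ ·))[Multiset.card s - k] := by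
  have hlen : (s.sort (· ≤ ·)).length = Multiset.card s := Multiset.length_sort _
  have h : Multiset.card s - k < (s.sort (· ≤ ·)).length := by omega
  exact ⟨h, (List.getD_eq_getElem _ _ h)⟩

lemma kth_mem (s : Multiset ℝ) (k : ℕ) (hk1 : 1 ≤ k) (hk2 : k ≤ Multiset.card s) :
    kthLargest s k ∈ s := by
  obtain ⟨h, he⟩ := kth_eq s k hk1 hk2
  rw [he, ← Multiset.mem_sort (· ≤ ·)]
  exact List.getElem_mem _

lemma sorted_le {l : List ℝ} (hs : l.Pairwise (· ≤ ·)) {i j : ℕ} (hij : i ≤ j)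
    (hj : j < l.length) : l[i]'(lt_of_le_of_lt hij hj) ≤ l[j] := by
  have := hs.rel_get_of_le (a := ⟨i, lt_of_le_of_lt hij hj⟩) (b := ⟨j, hj⟩)
    (by simp [Fin.mk_le_mk, hij])
  simpa using this

lemma C1 (s : Multiset ℝ) (k : ℕ) (y : ℝ) (hk1 : 1 ≤ k) (hk2 : k ≤ Multiset.card s)
    (h : Multiset.countP (fun z => y < z) s < k) : kthLargest s k ≤ y := by
  by_contra hlt
  push_neg at hlt
  obtain ⟨hi, he⟩ := kth_eq s k hk1 hk2
  set l := s.sort (· ≤ ·) with hl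
  set i := Multiset.card s - k with hidef
  have hlen : l.length = Multiset.card s := Multiset.length_sort _
  have hsorted : l.Pairwise (· ≤ ·) := Multiset.pairwise_sort _ _
  have hcount : Multiset.countP (fun z => y < z) s
      = (l.take i).countP (fun a => decide (y < a)) + (l.drop i).countP (fun a => decide (y < a)) := by
    rw [countP_sort, ← List.countP_append, List.take_append_drop]
  have hdrop : (l.drop i).countP (fun a => decide (y < a)) = (l.drop i).length := by
    apply List.countP_eq_length.mpr
    intro z hz
    obtain ⟨j, hj, rfl⟩ := List.mem_iff_getElem.mp hz
    have hij : i + j < l.length := by rw [List.length_drop] at hj; omega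
    rw [List.getElem_drop]
    simp only [decide_eq_true_eq]
    calc y < l[i] := he ▸ hlt
      _ ≤ l[i + j] := sorted_le hsorted (Nat.le_add_right i j) hij
  have : k ≤ Multiset.countP (fun z => y < z) s := by
    rw [hcount, hdrop, List.length_drop]
    omega
  omega

lemma C2 (s : Multiset ℝ) (k : ℕ) (y : ℝ) (hk1 : 1 ≤ k) (hk2 : k ≤ Multiset.card s)
    (h : Multiset.countP (fun z => z < y) s ≤ Multiset.card s - k) : y ≤ kthLargest s k := by
  by_contra hlt
  push_neg at hlt
  obtain ⟨hi, he⟩ := kth_eq s k hk1 hk2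
  set l := s.sort (· ≤ ·) with hl
  set i := Multiset.card s - k with hidef
  have hlen : l.length = Multiset.card s := Multiset.length_sort _
  have hsorted : l.Pairwise (· ≤ ·) := Multiset.pairwise_sort _ _
  have hcount : Multiset.countP (fun z => z < y) s
      = (l.take (i+1)).countP (fun a => decide (a < y))
        + (l.drop (i+1)).countP (fun a => decide (a < y)) := by
    rw [countP_sort, ← List.countP_append, List.take_append_drop]
  have htake : (l.take (i+1)).countP (fun a => decide (a < y)) = (l.take (i+1)).length := by
    apply List.countP_eq_length.mpr
    intro z hz
    obtain ⟨j, hj, rfl⟩ := List.mem_iff_getElem.mp hz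
    have hj' : j < l.length := by
      rw [List.length_take] at hj; omega
    have hji : j ≤ i := by rw [List.length_take] at hj; omega
    rw [List.getElem_take]
    simp only [decide_eq_true_eq]
    calc l[j] ≤ l[i] := sorted_le hsorted hji hi
      _ < y := he ▸ hlt
  have : i + 1 ≤ Multiset.countP (fun z => z < y) s := by
    rw [hcount, htake, List.length_take]
    omega
  omega

lemma L1 (s : Multiset ℝ) (k : ℕ) (hk1 : 1 ≤ k) (hk2 : k ≤ Multiset.card s) :
    Multiset.countP (fun z => kthLargest s k < z) s < k := by
  obtain ⟨hi, he⟩ := kth_eq s k hk1 hk2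
  set l := s.sort (· ≤ ·) with hl
  set i := Multiset.card s - k with hidef
  have hlen : l.length = Multiset.card s := Multiset.length_sort _
  have hsorted : l.Pairwise (· ≤ ·) := Multiset.pairwise_sort _ _
  have hcount : Multiset.countP (fun z => kthLargest s k < z) s
      = (l.take (i+1)).countP (fun a => decide (kthLargest s k < a))
        + (l.drop (i+1)).countP (fun a => decide (kthLargest s k < a)) := by
    rw [countP_sort, ← List.countP_append, List.take_append_drop]
  have htake : (l.take (i+1)).countP (fun a => decide (kthLargest s k < a)) = 0 := by
    apply List.countP_eq_zero.mpr
    intro z hz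
    obtain ⟨j, hj, rfl⟩ := List.mem_iff_getElem.mp hz
    have hj' : j < l.length := by rw [List.length_take] at hj; omega
    have hji : j ≤ i := by rw [List.length_take] at hj; omega
    rw [List.getElem_take]
    simp only [decide_eq_true_eq, not_lt]
    exact he ▸ sorted_le hsorted hji hi
  have hdrop : (l.drop (i+1)).countP (fun a => decide (kthLargest s k < a))
      ≤ (l.drop (i+1)).length := List.countP_le_length
  rw [List.length_drop] at hdrop
  omega

lemma L2 (s : Multiset ℝ) (k : ℕ) (hk1 : 1 ≤ k) (hk2 : k ≤ Multiset.card s) :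
    Multiset.countP (fun z => z < kthLargest s k) s ≤ Multiset.card s - k := by
  obtain ⟨hi, he⟩ := kth_eq s k hk1 hk2
  set l := s.sort (· ≤ ·) with hl
  set i := Multiset.card s - k with hidef
  have hlen : l.length = Multiset.card s := Multiset.length_sort _
  have hsorted : l.Pairwise (· ≤ ·) := Multiset.pairwise_sort _ _
  have hcount : Multiset.countP (fun z => z < kthLargest s k) s
      = (l.take i).countP (fun a => decide (a < kthLargest s k))
        + (l.drop i).countP (fun a => decide (a < kthLargest s k)) := by
    rw [countP_sort, ← List.countP_append, List.take_append_drop]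
  have hdrop : (l.drop i).countP (fun a => decide (a < kthLargest s k)) = 0 := by
    apply List.countP_eq_zero.mpr
    intro z hz
    obtain ⟨j, hj, rfl⟩ := List.mem_iff_getElem.mp hz
    have hij : i + j < l.length := by rw [List.length_drop] at hj; omega
    rw [List.getElem_drop]
    simp only [decide_eq_true_eq, not_lt]
    exact he ▸ sorted_le hsorted (Nat.le_add_right i j) hij
  have htake : (l.take i).countP (fun a => decide (a < kthLargest s k))
      ≤ (l.take i).length := List.countP_le_length
  rw [List.length_take] at htake
  omega


lemma countP_mono {α : Type*} (s : Multiset α) (p q : α → Prop) [DecidablePred p]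
    [DecidablePred q] (h : ∀ a ∈ s, p a → q a) :
    Multiset.countP p s ≤ Multiset.countP q s := by
  induction s using Multiset.induction_on with
  | empty => simp
  | cons a t ih =>
    rw [Multiset.countP_cons, Multiset.countP_cons]
    have := h a (Multiset.mem_cons_self a t)
    have ht := ih (fun b hb => h b (Multiset.mem_cons_of_mem hb))
    by_cases h1 : p a
    · rw [if_pos h1, if_pos (this h1)]; omega
    · rw [if_neg h1]; split_ifs <;> omega

lemma continuous_kth (G : Finset (ℝ → ℝ)) (hc : ∀ g ∈ G, Continuous g) (k : ℕ)
    (hk1 : 1 ≤ k) (hk2 : k ≤ G.card) :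
    Continuous fun x => kthLargest (G.val.map (fun g => g x)) k := by
  classical
  set lam : ℝ → ℝ := fun x => kthLargest (G.val.map (fun g => g x)) k with hlam
  have hcard : ∀ x, Multiset.card (G.val.map (fun g => g x)) = G.card := by
    intro x; rw [Multiset.card_map]; rfl
  rw [continuous_iff_continuousAt]
  intro a
  have key : ∀ ε > (0:ℝ), ∀ᶠ x in nhds a, |lam x - lam a| ≤ ε := by
    intro ε hε
    have hev : ∀ᶠ x in nhds a, ∀ g ∈ G, |g x - g a| < ε := by
      rw [Filter.eventually_all_finset]
      intro g hg
      have := (hc g hg).continuousAt (x := a)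
      have := Metric.tendsto_nhds.mp this ε hε
      simpa [Real.dist_eq] using this
    have hA := L1 (G.val.map (fun g => g a)) k hk1 (by rw [hcard]; exact hk2)
    have hB := L2 (G.val.map (fun g => g a)) k hk1 (by rw [hcard]; exact hk2)
    filter_upwards [hev] with x hx
    have hub : lam x ≤ lam a + ε := by
      apply C1 _ k _ hk1 (by rw [hcard]; exact hk2)
      calc Multiset.countP (fun z => lam a + ε < z) (G.val.map fun g => g x)
          = Multiset.countP (fun g => lam a + ε < g x) G.val := by
            rw [Multiset.countP_map, Multiset.countP_eq_card_filter]
        _ ≤ Multiset.countP (fun g => lam a < g a) G.val := by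
            apply countP_mono
            intro g hg hgx
            have := hx g hg
            have := abs_lt.mp this
            linarith [this.1, this.2]
        _ = Multiset.countP (fun z => lam a < z) (G.val.map fun g => g a) := by
            rw [Multiset.countP_map, Multiset.countP_eq_card_filter]
        _ < k := hA
    have hlb : lam a - ε ≤ lam x := by
      apply C2 _ k _ hk1 (by rw [hcard]; exact hk2)
      rw [hcard]
      calc Multiset.countP (fun z => z < lam a - ε) (G.val.map fun g => g x)
          = Multiset.countP (fun g => g x < lam a - ε) G.val := by
            rw [Multiset.countP_map, Multiset.countP_eq_card_filter]
        _ ≤ Multiset.countP (fun g => g a < lam a) G.val := by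
            apply countP_mono
            intro g hg hgx
            have := abs_lt.mp (hx g hg)
            linarith [this.1, this.2]
        _ = Multiset.countP (fun z => z < lam a) (G.val.map fun g => g a) := by
            rw [Multiset.countP_map, Multiset.countP_eq_card_filter]
        _ ≤ G.card - k := by rw [hcard] at hB; exact hB
    rw [abs_le]; constructor <;> linarith
  rw [ContinuousAt, Metric.tendsto_nhds]
  intro ε hε
  filter_upwards [key (ε/2) (by linarith)] with x hx
  rw [Real.dist_eq]
  linarith

lemma family_median (G U : Finset (ℝ → ℝ)) (hGU : G ⊆ U) (r : ℕ)
    (hcard : G.card = 2 * r + 1) (M m : ℝ)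
    (hdir : ∀ f ∈ U, ∀ g ∈ U, f ≠ g →
      ((∀ x, M < x → f x < g x) ∧ (∀ x, x < m → g x < f x)) ∨
      ((∀ x, M < x → g x < f x) ∧ (∀ x, x < m → f x < g x))) :
    ∃ g₀ ∈ G,
      (∀ x, M < x → kthLargest (G.val.map (fun g => g x)) ((G.card + 1) / 2) = g₀ x) ∧
      (∀ x, x < m → kthLargest (G.val.map (fun g => g x)) ((G.card + 1) / 2) = g₀ x) := by
  classical
  set k := (G.card + 1) / 2 with hk
  have hk1 : 1 ≤ k := by omega
  have hk2 : k ≤ G.card := by omega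
  have hnk : G.card - k = k - 1 := by omega
  have hcardmap : ∀ x : ℝ, Multiset.card (G.val.map (fun g => g x)) = G.card := by
    intro x; rw [Multiset.card_map]; rfl
  set a := M + 1 with ha
  have haM : M < a := by simp [ha]
  -- the function achieving the median at a
  have hv : kthLargest (G.val.map (fun g => g a)) k ∈ G.val.map (fun g => g a) :=
    kth_mem _ _ hk1 (by rw [hcardmap]; exact hk2)
  obtain ⟨g₀, hg₀G, hg₀a⟩ := Multiset.mem_map.mp hv
  have hg₀G' : g₀ ∈ G := hg₀G
  refine ⟨g₀, hg₀G', ?_⟩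
  -- counts at a
  have hA : Multiset.countP (fun g => g₀ a < g a) G.val < k := by
    have := L1 (G.val.map (fun g => g a)) k hk1 (by rw [hcardmap]; exact hk2)
    rw [Multiset.countP_map, ← Multiset.countP_eq_card_filter, ← hg₀a] at this
    exact this
  have hB : Multiset.countP (fun g => g a < g₀ a) G.val ≤ k - 1 := by
    have := L2 (G.val.map (fun g => g a)) k hk1 (by rw [hcardmap]; exact hk2)
    rw [Multiset.countP_map, ← Multiset.countP_eq_card_filter, ← hg₀a, hcardmap, hnk] at this
    exact this
  constructor
  · -- x > M
    intro x hx
    have hgt : Multiset.countP (fun g => g₀ x < g x) G.val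
        = Multiset.countP (fun g => g₀ a < g a) G.val := by
      apply Multiset.countP_congr rfl
      intro g hg
      apply propext
      by_cases hne : g = g₀
      · subst hne; exact iff_of_false (lt_irrefl _) (lt_irrefl _)
      · rcases hdir g₀ (hGU hg₀G') g (hGU hg) (Ne.symm hne) with ⟨h1, _⟩ | ⟨h1, _⟩
        · exact iff_of_true (h1 x hx) (h1 a haM)
        · exact iff_of_false (not_lt.mpr (le_of_lt (h1 x hx)))
            (not_lt.mpr (le_of_lt (h1 a haM)))
    have hlt : Multiset.countP (fun g => g x < g₀ x) G.val
        = Multiset.countP (fun g => g a < g₀ a) G.val := by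
      apply Multiset.countP_congr rfl
      intro g hg
      apply propext
      by_cases hne : g = g₀
      · subst hne; exact iff_of_false (lt_irrefl _) (lt_irrefl _)
      · rcases hdir g₀ (hGU hg₀G') g (hGU hg) (Ne.symm hne) with ⟨h1, _⟩ | ⟨h1, _⟩
        · exact iff_of_false (not_lt.mpr (le_of_lt (h1 x hx)))
            (not_lt.mpr (le_of_lt (h1 a haM)))
        · exact iff_of_true (h1 x hx) (h1 a haM)
    apply le_antisymm
    · apply C1 _ k _ hk1 (by rw [hcardmap]; exact hk2)
      rw [Multiset.countP_map, ← Multiset.countP_eq_card_filter, hgt]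
      exact hA
    · apply C2 _ k _ hk1 (by rw [hcardmap]; exact hk2)
      rw [Multiset.countP_map, ← Multiset.countP_eq_card_filter, hlt, hcardmap, hnk]
      exact hB
  · -- x < m
    intro x hx
    have hgt : Multiset.countP (fun g => g₀ x < g x) G.val
        = Multiset.countP (fun g => g a < g₀ a) G.val := by
      apply Multiset.countP_congr rfl
      intro g hg
      apply propext
      by_cases hne : g = g₀
      · subst hne; exact iff_of_false (lt_irrefl _) (lt_irrefl _)
      · rcases hdir g₀ (hGU hg₀G') g (hGU hg) (Ne.symm hne) with ⟨h1, h2⟩ | ⟨h1, h2⟩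
        · exact iff_of_false (not_lt.mpr (le_of_lt (h2 x hx)))
            (not_lt.mpr (le_of_lt (h1 a haM)))
        · exact iff_of_true (h2 x hx) (h1 a haM)
    have hlt : Multiset.countP (fun g => g x < g₀ x) G.val
        = Multiset.countP (fun g => g₀ a < g a) G.val := by
      apply Multiset.countP_congr rfl
      intro g hg
      apply propext
      by_cases hne : g = g₀
      · subst hne; exact iff_of_false (lt_irrefl _) (lt_irrefl _)
      · rcases hdir g₀ (hGU hg₀G') g (hGU hg) (Ne.symm hne) with ⟨h1, h2⟩ | ⟨h1, h2⟩
        · exact iff_of_true (h2 x hx) (h1 a haM)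
        · exact iff_of_false (not_lt.mpr (le_of_lt (h2 x hx)))
            (not_lt.mpr (le_of_lt (h1 a haM)))
    apply le_antisymm
    · apply C1 _ k _ hk1 (by rw [hcardmap]; exact hk2)
      rw [Multiset.countP_map, ← Multiset.countP_eq_card_filter, hgt]
      exact lt_of_le_of_lt hB (Nat.sub_lt hk1 one_pos)
    · apply C2 _ k _ hk1 (by rw [hcardmap]; exact hk2)
      rw [Multiset.countP_map, ← Multiset.countP_eq_card_filter, hlt, hcardmap, hnk]
      exact Nat.le_pred_of_lt hA


end HamAux

/-- The median levels of two odd-size families of pairwise once-crossing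
pseudo-lines have a common point (the dual form of the existence of a
ham-sandwich cut). -/
theorem median_levels_meet
    (G₁ G₂ : Finset (ℝ → ℝ))
    (hcont : ∀ f ∈ G₁ ∪ G₂, Continuous f)
    (hodd₁ : Odd G₁.card) (hodd₂ : Odd G₂.card)
    (hcross : ∀ f ∈ G₁ ∪ G₂, ∀ g ∈ G₁ ∪ G₂, f ≠ g → CrossesOnce f g) :
    ∃ x : ℝ,
      kthLargest (G₁.val.map (fun g => g x)) ((G₁.card + 1) / 2)
        = kthLargest (G₂.val.map (fun g => g x)) ((G₂.card + 1) / 2) := by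
  classical
  obtain ⟨r₁, hr₁⟩ := hodd₁
  obtain ⟨r₂, hr₂⟩ := hodd₂
  set U := G₁ ∪ G₂ with hU
  -- global bounds on crossing points
  have hdir : ∃ M m : ℝ, m ≤ M ∧ ∀ f ∈ U, ∀ g ∈ U, f ≠ g →
      ((∀ x, M < x → f x < g x) ∧ (∀ x, x < m → g x < f x)) ∨
      ((∀ x, M < x → g x < f x) ∧ (∀ x, x < m → f x < g x)) := by
    set D : (ℝ → ℝ) → (ℝ → ℝ) → ℝ := fun f g =>
      if h : Prec f g then h.choose else if h' : Prec g f then h'.choose else 0 with hD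
    set S : Finset ℝ := insert 0 ((U ×ˢ U).image (fun p => D p.1 p.2)) with hS
    have h0 : (0:ℝ) ∈ S := Finset.mem_insert_self _ _
    have hne : S.Nonempty := ⟨0, h0⟩
    refine ⟨S.max' hne, S.min' hne,
      le_trans (S.min'_le 0 h0) (S.le_max' 0 h0), ?_⟩
    intro f hf g hg hfg
    have hmemS : D f g ∈ S := by
      apply Finset.mem_insert_of_mem
      exact Finset.mem_image.mpr ⟨(f, g), Finset.mem_product.mpr ⟨hf, hg⟩, rfl⟩
    have hle : D f g ≤ S.max' hne := S.le_max' _ hmemS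
    have hge : S.min' hne ≤ D f g := S.min'_le _ hmemS
    by_cases h : Prec f g
    · obtain ⟨heq, hleft, hright⟩ := h.choose_spec
      have hDeq : D f g = h.choose := dif_pos h
      rw [hDeq] at hle hge
      left
      exact ⟨fun x hx => hright x (lt_of_le_of_lt hle hx),
             fun x hx => hleft x (lt_of_lt_of_le hx hge)⟩
    · have h' : Prec g f := (hcross f hf g hg hfg).resolve_left h
      obtain ⟨heq, hleft, hright⟩ := h'.choose_spec
      have hDeq : D f g = h'.choose := (dif_neg h).trans (dif_pos h')
      rw [hDeq] at hle hge
      right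
      exact ⟨fun x hx => hright x (lt_of_le_of_lt hle hx),
             fun x hx => hleft x (lt_of_lt_of_le hx hge)⟩
  obtain ⟨M, m, hmM, hdir⟩ := hdir
  obtain ⟨g₁, hg₁, hpos₁, hneg₁⟩ :=
    HamAux.family_median G₁ U Finset.subset_union_left r₁ hr₁ M m hdir
  obtain ⟨g₂, hg₂, hpos₂, hneg₂⟩ :=
    HamAux.family_median G₂ U Finset.subset_union_right r₂ hr₂ M m hdir
  set a := M + 1 with ha
  set b := m - 1 with hb
  have haM : M < a := by simp [ha]
  have hbm : b < m := by simp [hb]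
  have hba : b ≤ a := by simp [ha, hb]; linarith
  by_cases hgg : g₁ = g₂
  · exact ⟨a, by rw [hpos₁ a haM, hpos₂ a haM, hgg]⟩
  · have hg₁U : g₁ ∈ U := Finset.subset_union_left hg₁
    have hg₂U : g₂ ∈ U := Finset.subset_union_right hg₂
    set F : ℝ → ℝ := fun x =>
      kthLargest (G₁.val.map (fun g => g x)) ((G₁.card + 1) / 2)
        - kthLargest (G₂.val.map (fun g => g x)) ((G₂.card + 1) / 2) with hF
    have hFc : Continuous F := by
      apply Continuous.sub
      · exact HamAux.continuous_kth G₁ (fun g hg => hcont g (Finset.subset_union_left hg))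
          _ (by omega) (by omega)
      · exact HamAux.continuous_kth G₂ (fun g hg => hcont g (Finset.subset_union_right hg))
          _ (by omega) (by omega)
    rcases hdir g₁ hg₁U g₂ hg₂U hgg with ⟨h1, h2⟩ | ⟨h1, h2⟩
    · -- g₁ < g₂ on the right, g₂ < g₁ on the left : F a < 0 < F b
      have hFa : F a < 0 := by
        simp only [hF, hpos₁ a haM, hpos₂ a haM]
        linarith [h1 a haM]
      have hFb : 0 < F b := by
        simp only [hF, hneg₁ b hbm, hneg₂ b hbm]
        linarith [h2 b hbm]
      have := intermediate_value_Icc' hba hFc.continuousOn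
        (Set.mem_Icc.mpr ⟨le_of_lt hFa, le_of_lt hFb⟩)
      obtain ⟨x, _, hx⟩ := this
      exact ⟨x, sub_eq_zero.mp hx⟩
    · have hFa : 0 < F a := by
        simp only [hF, hpos₁ a haM, hpos₂ a haM]
        linarith [h1 a haM]
      have hFb : F b < 0 := by
        simp only [hF, hneg₁ b hbm, hneg₂ b hbm]
        linarith [h2 b hbm]
      have := intermediate_value_Icc hba hFc.continuousOn
        (Set.mem_Icc.mpr ⟨le_of_lt hFb, le_of_lt hFa⟩)
      obtain ⟨x, _, hx⟩ := this
      exact ⟨x, sub_eq_zero.mp hx⟩
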